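/- arXiv:2509.26188 — 2 statements merged into one kernel-verified Lean document; each statement's English description precedes it below -/
import Mathlib

section
/- Let d ≥ 1 be a natural number and λ > 0. There exists a constant C > 0 such that for every ε ∈ (0, 1/2): (i) if d = 1, then ∫₀^∞ s^{−1/2} (s + 2ε)^{−d/2} e^{−λ s} ds ≤ C · log(ε^{−1}); (ii) if d ≥ 2, then ∫₀^∞ s^{−1/2} (s + 2ε)^{−d/2} e^{−λ s} ds ≤ C · ε^{−(d−1)/2}. -/
open MeasureTheory

set_option maxHeartbeats 1000000 in
open Set Real in
theorem stmt6 (d : ℕ) (hd : 1 ≤ d) (lam : ℝ) (hlam : 0 < lam) :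
    ∃ C > 0, ∀ ε : ℝ, ε ∈ Set.Ioo (0 : ℝ) (1/2) →
      (d = 1 →
        ∫ s in Set.Ioi (0 : ℝ), s ^ (-(1:ℝ)/2) * (s + 2 * ε) ^ (-(d : ℝ) / 2) * Real.exp (-lam * s)
          ≤ C * Real.log ε⁻¹) ∧
      (2 ≤ d →
        ∫ s in Set.Ioi (0 : ℝ), s ^ (-(1:ℝ)/2) * (s + 2 * ε) ^ (-(d : ℝ) / 2) * Real.exp (-lam * s)
          ≤ C * ε ^ (-((d : ℝ) - 1) / 2)) := by
  have hlog2 : 0 < Real.log 2 := Real.log_pos one_lt_two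
  refine ⟨(2 + 1/lam)/Real.log 2 + 5 + 1/lam, by positivity, ?_⟩
  rintro ε ⟨hε0, hε2⟩
  set a : ℝ := 2 * ε with ha
  have ha0 : 0 < a := by positivity
  have ha1 : a < 1 := by rw [ha]; linarith
  have haε : ε ≤ a := by rw [ha]; linarith
  have hd1 : (1:ℝ) ≤ (d:ℝ) := by exact_mod_cast hd
  set f : ℝ → ℝ := fun s => s ^ (-(1:ℝ)/2) * (s + a) ^ (-(d : ℝ) / 2) * Real.exp (-lam * s)
    with hf
  have hmf : Measurable f := by
    fun_prop
  have hf0 : ∀ s ∈ Set.Ioi (0:ℝ), 0 ≤ f s := by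
    intro s hs
    have hs0 : (0:ℝ) < s := hs
    have hsa : (0:ℝ) < s + a := by linarith
    exact mul_nonneg (mul_nonneg (Real.rpow_nonneg hs0.le _)
      (Real.rpow_nonneg hsa.le _)) (Real.exp_nonneg _)
  -- majorants
  set g1 : ℝ → ℝ := fun s => a ^ (-(d : ℝ) / 2) * s ^ (-(1:ℝ)/2) with hg1
  set g2 : ℝ → ℝ := fun s => s ^ (-((d : ℝ) + 1) / 2) with hg2
  set g3 : ℝ → ℝ := fun s => Real.exp (-lam * s) with hg3
  have hexp : -(d:ℝ)/2 ≤ 0 := by linarith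
  have h1 : ∀ s ∈ Set.Ioc 0 a, f s ≤ g1 s := by
    intro s hs
    have hs0 : 0 < s := hs.1
    have hb : (s + a) ^ (-(d : ℝ) / 2) ≤ a ^ (-(d : ℝ) / 2) :=
      Real.rpow_le_rpow_of_nonpos ha0 (by linarith) hexp
    have he : Real.exp (-lam * s) ≤ 1 := Real.exp_le_one_iff.mpr (by nlinarith)
    calc f s ≤ s ^ (-(1:ℝ)/2) * (a ^ (-(d : ℝ) / 2)) * 1 := by
          apply mul_le_mul (mul_le_mul le_rfl hb (by positivity) (by positivity)) he
            (Real.exp_nonneg _) (by positivity)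
      _ = g1 s := by rw [hg1]; ring
  have h2 : ∀ s ∈ Set.Ioc a 1, f s ≤ g2 s := by
    intro s hs
    have hs0 : 0 < s := lt_trans ha0 hs.1
    have hb : (s + a) ^ (-(d : ℝ) / 2) ≤ s ^ (-(d : ℝ) / 2) :=
      Real.rpow_le_rpow_of_nonpos hs0 (by linarith) hexp
    have he : Real.exp (-lam * s) ≤ 1 := Real.exp_le_one_iff.mpr (by nlinarith)
    calc f s ≤ s ^ (-(1:ℝ)/2) * s ^ (-(d : ℝ) / 2) * 1 := by
          apply mul_le_mul (mul_le_mul le_rfl hb (by positivity) (by positivity)) he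
            (Real.exp_nonneg _) (by positivity)
      _ = g2 s := by
          rw [mul_one, ← Real.rpow_add hs0, hg2]
          norm_num
          ring_nf
  have h3 : ∀ s ∈ Set.Ioi (1:ℝ), f s ≤ g3 s := by
    intro s hs
    have hs1 : (1:ℝ) ≤ s := le_of_lt hs
    have hb1 : s ^ (-(1:ℝ)/2) ≤ 1 :=
      Real.rpow_le_one_of_one_le_of_nonpos hs1 (by norm_num)
    have hb2 : (s + a) ^ (-(d : ℝ) / 2) ≤ 1 :=
      Real.rpow_le_one_of_one_le_of_nonpos (by linarith) hexp
    calc f s ≤ 1 * 1 * Real.exp (-lam * s) := by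
          apply mul_le_mul (mul_le_mul hb1 hb2 (by positivity) (by norm_num)) le_rfl
            (Real.exp_nonneg _) (by norm_num)
      _ = g3 s := by rw [hg3]; ring
  -- integrability of majorants
  have hg1i : IntegrableOn g1 (Set.Ioc 0 a) := by
    have := (intervalIntegral.intervalIntegrable_rpow' (a := 0) (b := a)
      (by norm_num : (-1:ℝ) < -(1:ℝ)/2))
    exact ((intervalIntegrable_iff_integrableOn_Ioc_of_le ha0.le).mp this).const_mul _
  have h0uIcc : (0:ℝ) ∉ Set.uIcc a 1 := by
    rw [Set.uIcc_of_le ha1.le]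
    rintro ⟨h, -⟩; linarith
  have hg2i : IntegrableOn g2 (Set.Ioc a 1) := by
    have := intervalIntegral.intervalIntegrable_rpow (a := a) (b := 1)
      (μ := volume) (r := -((d : ℝ) + 1) / 2) (Or.inr h0uIcc)
    exact (intervalIntegrable_iff_integrableOn_Ioc_of_le ha1.le).mp this
  have hg3i : IntegrableOn g3 (Set.Ioi 1) := exp_neg_integrableOn_Ioi 1 hlam
  -- integrability of f
  have hfi : ∀ (S : Set ℝ) (g : ℝ → ℝ), S ⊆ Set.Ioi 0 → MeasurableSet S → IntegrableOn g S →
      (∀ s ∈ S, f s ≤ g s) → IntegrableOn f S := by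
    intro S g hS hSm hgi hfg
    apply hgi.mono' (hmf.aestronglyMeasurable.restrict)
    rw [ae_restrict_iff' hSm]
    exact ae_of_all _ fun s hs => by
      rw [Real.norm_of_nonneg (hf0 s (hS hs))]; exact hfg s hs
  have hf1i : IntegrableOn f (Set.Ioc 0 a) :=
    hfi _ g1 (fun s hs => hs.1) measurableSet_Ioc hg1i h1
  have hf2i : IntegrableOn f (Set.Ioc a 1) :=
    hfi _ g2 (fun s hs => lt_trans ha0 hs.1) measurableSet_Ioc hg2i h2
  have hf3i : IntegrableOn f (Set.Ioi 1) :=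
    hfi _ g3 (fun s (hs : s ∈ Set.Ioi (1:ℝ)) => show (0:ℝ) < s from lt_trans one_pos hs) measurableSet_Ioi hg3i h3
  -- split the integral
  have hsplit : ∫ s in Set.Ioi (0:ℝ), f s =
      (∫ s in Set.Ioc 0 a, f s) + (∫ s in Set.Ioc a 1, f s) + (∫ s in Set.Ioi 1, f s) := by
    have h01 : Set.Ioc (0:ℝ) a ∪ Set.Ioc a 1 = Set.Ioc 0 1 :=
      Set.Ioc_union_Ioc_eq_Ioc ha0.le ha1.le
    have e1 : ∫ s in Set.Ioc (0:ℝ) a ∪ Set.Ioc a 1, f s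
        = (∫ s in Set.Ioc 0 a, f s) + (∫ s in Set.Ioc a 1, f s) :=
      setIntegral_union (Set.Ioc_disjoint_Ioc_of_le le_rfl) measurableSet_Ioc hf1i hf2i
    have hf12 : IntegrableOn f (Set.Ioc 0 1) := h01 ▸ hf1i.union hf2i
    have e2 : ∫ s in Set.Ioc (0:ℝ) 1 ∪ Set.Ioi 1, f s
        = (∫ s in Set.Ioc 0 1, f s) + (∫ s in Set.Ioi 1, f s) :=
      setIntegral_union (Set.Ioc_disjoint_Ioi le_rfl) measurableSet_Ioi hf12 hf3i
    rw [← Set.Ioc_union_Ioi_eq_Ioi (le_of_lt (lt_trans ha0 ha1)), e2, ← h01, e1]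
  -- bound piece 1
  have E1 : ∫ s in Set.Ioc 0 a, f s ≤ 2 * a ^ ((1 - (d:ℝ))/2) := by
    have hle := setIntegral_mono_on hf1i hg1i measurableSet_Ioc h1
    have hval : ∫ s in Set.Ioc 0 a, g1 s = 2 * a ^ ((1 - (d:ℝ))/2) := by
      rw [hg1]
      rw [MeasureTheory.integral_const_mul]
      rw [← intervalIntegral.integral_of_le ha0.le,
        integral_rpow (Or.inl (by norm_num : (-1:ℝ) < -(1:ℝ)/2))]
      rw [Real.zero_rpow (by norm_num : (-(1:ℝ)/2 + 1) ≠ 0)]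
      have : a ^ (-(d:ℝ)/2) * a ^ ((1:ℝ)/2) = a ^ ((1 - (d:ℝ))/2) := by
        rw [← Real.rpow_add ha0]; ring_nf
      rw [show (-(1:ℝ)/2 + 1) = (1:ℝ)/2 by norm_num]
      rw [sub_zero]
      field_simp
      rw [← neg_div]
      nlinarith [this]
    linarith [hle, hval.le]
  -- bound piece 3
  have E3 : ∫ s in Set.Ioi (1:ℝ), f s ≤ 1 / lam := by
    have hle := setIntegral_mono_on hf3i hg3i measurableSet_Ioi h3
    have hval : ∫ s in Set.Ioi (1:ℝ), g3 s = Real.exp (-lam) / lam := by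
      have hderiv : ∀ x ∈ Set.Ici (1:ℝ),
          HasDerivAt (fun x => -(1/lam) * Real.exp (-lam * x)) (g3 x) x := by
        intro x _
        have h1 : HasDerivAt (fun x : ℝ => -lam * x) (-lam) x := by
          simpa using (hasDerivAt_id x).const_mul (-lam)
        have h2 := (h1.exp).const_mul (-(1/lam))
        have e : g3 x = -(1 / lam) * (Real.exp (-lam * x) * -lam) := by
          rw [hg3]
          field_simp
        rw [e]
        exact h2
      have htend : Filter.Tendsto (fun x => -(1/lam) * Real.exp (-lam * x))
          Filter.atTop (nhds 0) := by
        have h1 : Filter.Tendsto (fun x : ℝ => lam * x) Filter.atTop Filter.atTop :=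
          Filter.Tendsto.const_mul_atTop hlam Filter.tendsto_id
        have h2 : Filter.Tendsto (fun x : ℝ => Real.exp (-lam * x)) Filter.atTop (nhds 0) := by
          have := Real.tendsto_exp_neg_atTop_nhds_zero.comp h1
          simpa [Function.comp_def, neg_mul] using this
        simpa using h2.const_mul (-(1/lam))
      have := integral_Ioi_of_hasDerivAt_of_tendsto' hderiv hg3i htend
      rw [this]
      field_simp
      ring
    rw [hval] at hle
    have hgg : Real.exp (-lam) / lam ≤ 1 / lam := by
      gcongr
      exact Real.exp_le_one_iff.mpr (by linarith)
    linarith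
  -- bound piece 2, case d = 1
  have E21 : d = 1 → ∫ s in Set.Ioc a 1, f s ≤ Real.log ε⁻¹ := by
    intro hdone
    have hle := setIntegral_mono_on hf2i hg2i measurableSet_Ioc h2
    have hgeq : Set.EqOn g2 (fun s => s⁻¹) (Set.Ioc a 1) := by
      intro s _
      have hex : -((d:ℝ) + 1) / 2 = -1 := by rw [hdone]; norm_num
      show s ^ (-((d:ℝ) + 1) / 2) = s⁻¹
      rw [hex, Real.rpow_neg_one]
    have hval : ∫ s in Set.Ioc a 1, g2 s = Real.log (1 / a) := by
      rw [setIntegral_congr_fun measurableSet_Ioc hgeq,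
        ← intervalIntegral.integral_of_le ha1.le, integral_inv_of_pos ha0 one_pos]
    rw [hval] at hle
    have hinv : (1:ℝ) / a ≤ ε⁻¹ := by
      rw [one_div]
      exact inv_anti₀ hε0 haε
    have := Real.log_le_log (by positivity) hinv
    linarith
  -- bound piece 2, case 2 ≤ d
  have E22 : 2 ≤ d → ∫ s in Set.Ioc a 1, f s ≤ 2 * a ^ ((1 - (d:ℝ))/2) := by
    intro hd2
    have hd2' : (2:ℝ) ≤ (d:ℝ) := by exact_mod_cast hd2
    have hle := setIntegral_mono_on hf2i hg2i measurableSet_Ioc h2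
    have hne : -((d:ℝ) + 1) / 2 ≠ -1 := by
      intro h
      have : (d:ℝ) = 1 := by linarith
      linarith
    have hval : ∫ s in Set.Ioc a 1, g2 s
        = ((1:ℝ) ^ (-((d:ℝ)+1)/2 + 1) - a ^ (-((d:ℝ)+1)/2 + 1)) / (-((d:ℝ)+1)/2 + 1) := by
      rw [hg2, ← intervalIntegral.integral_of_le ha1.le,
        integral_rpow (Or.inr ⟨hne, h0uIcc⟩)]
    rw [hval, Real.one_rpow, show -((d:ℝ)+1)/2 + 1 = (1 - (d:ℝ))/2 by ring] at hle
    have hap : 0 ≤ a ^ ((1 - (d:ℝ))/2) := Real.rpow_nonneg ha0.le _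
    have hbnd : (1 - a ^ ((1 - (d:ℝ))/2)) / ((1 - (d:ℝ))/2) ≤ 2 * a ^ ((1 - (d:ℝ))/2) := by
      rw [div_le_iff_of_neg (by linarith : (1 - (d:ℝ))/2 < 0)]
      nlinarith [mul_nonneg hap (show (0:ℝ) ≤ (d:ℝ) - 2 by linarith)]
    linarith
  -- conclude
  have hI3pos : (0:ℝ) < 1 / lam := by positivity
  constructor
  · intro hdone
    have hE1 : ∫ s in Set.Ioc 0 a, f s ≤ 2 := by
      have : ((1:ℝ) - (d:ℝ))/2 = 0 := by rw [hdone]; norm_num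
      rw [this, Real.rpow_zero, mul_one] at E1
      exact E1
    have hE2 := E21 hdone
    have h2inv : (2:ℝ) ≤ ε⁻¹ := by
      have := inv_anti₀ hε0 hε2.le
      norm_num at this
      exact this
    have hεlog : Real.log 2 ≤ Real.log ε⁻¹ := Real.log_le_log two_pos h2inv
    have hkey : ((2 + 1/lam)/Real.log 2) * Real.log 2 = 2 + 1/lam :=
      div_mul_cancel₀ _ (ne_of_gt hlog2)
    have hprod : ((2 + 1/lam)/Real.log 2) * Real.log 2
        ≤ ((2 + 1/lam)/Real.log 2) * Real.log ε⁻¹ :=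
      mul_le_mul_of_nonneg_left hεlog (by positivity)
    have hprod2 : (0:ℝ) ≤ (4 + 1/lam) * Real.log ε⁻¹ :=
      mul_nonneg (by positivity) (by linarith)
    rw [hsplit]
    nlinarith [hE1, hE2, E3, hprod, hprod2, hkey]
  · intro hd2
    have hd2' : (2:ℝ) ≤ (d:ℝ) := by exact_mod_cast hd2
    have hq : ((1:ℝ) - (d:ℝ))/2 ≤ 0 := by linarith
    have hqe : -((d:ℝ) - 1)/2 = (1 - (d:ℝ))/2 := by ring
    have hmono : a ^ ((1 - (d:ℝ))/2) ≤ ε ^ ((1 - (d:ℝ))/2) :=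
      Real.rpow_le_rpow_of_nonpos hε0 haε hq
    have hone : (1:ℝ) ≤ ε ^ ((1 - (d:ℝ))/2) :=
      Real.one_le_rpow_of_pos_of_le_one_of_nonpos hε0 (by linarith) hq
    have hE2 := E22 hd2
    have hprod : (1/lam) * 1 ≤ (1/lam) * (ε ^ ((1 - (d:ℝ))/2)) :=
      mul_le_mul_of_nonneg_left hone (by positivity)
    have hprod2 : (0:ℝ) ≤ ((2 + 1/lam)/Real.log 2) * (ε ^ ((1 - (d:ℝ))/2)) :=
      mul_nonneg (by positivity) (by linarith)
    rw [hsplit, hqe]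
    nlinarith [E1, hE2, E3, hmono, hprod, hprod2]
end

section
/- Let α ∈ (0, 1], let d ≥ 1 be a natural number, let c₁ > 0, and let (λ_i)_{i≥1} be a sequence of positive reals with λ_i ≥ c₁ · i^{2/d} for all i ≥ 1. Then there exists a constant C > 0 such that for every ε ∈ (0, 1): (i) if d < 2(1+α), then Σ_{i=1}^∞ e^{−2 λ_i ε} λ_i^{−(1+α)} ≤ C; (ii) if d = 2(1+α), then Σ_{i=1}^∞ e^{−2 λ_i ε} λ_i^{−(1+α)} ≤ C · log(1 + ε^{−1}); (iii) if d > 2(1+α), then Σ_{i=1}^∞ e^{−2 λ_i ε} λ_i^{−(1+α)} ≤ C · ε^{−(d − 2(1+α))/2}. -/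
open Finset Real

/-- Bernoulli-type: for `0 < p < 1`, `(1-p) * (i+1)^(-p) ≤ (i+1)^(1-p) - i^(1-p)`. -/
lemma lemA {p : ℝ} (hp0 : 0 < p) (hp1 : p < 1) (i : ℕ) :
    (1 - p) * ((i : ℝ) + 1) ^ (-p) ≤ ((i : ℝ) + 1) ^ (1 - p) - (i : ℝ) ^ (1 - p) := by
  set x : ℝ := (i : ℝ) + 1 with hxdef
  have hx1 : (1 : ℝ) ≤ x := by
    rw [hxdef]; linarith [Nat.cast_nonneg (α := ℝ) i]
  have hx0 : (0 : ℝ) < x := lt_of_lt_of_le one_pos hx1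
  set s : ℝ := 1 - p with hsdef
  have hs0 : 0 < s := by simp [hsdef]; linarith
  have hs1 : s ≤ 1 := by simp [hsdef]; linarith
  have hux : (0:ℝ) ≤ 1 - 1/x := by
    have : 1/x ≤ 1 := by rw [div_le_one hx0]; exact hx1
    linarith
  have hi : (i : ℝ) = x * (1 - 1/x) := by field_simp; rw [hxdef]; ring
  have key : (i : ℝ) ^ s ≤ x ^ s * (1 - s / x) := by
    rw [hi, Real.mul_rpow hx0.le hux]
    have hbern : (1 - 1/x) ^ s ≤ 1 - s / x := by
      have := Real.geom_mean_le_arith_mean2_weighted hs0.le (by linarith : (0:ℝ) ≤ 1 - s)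
        hux zero_le_one (by ring)
      calc (1 - 1/x) ^ s = (1 - 1/x) ^ s * (1:ℝ) ^ (1 - s) := by simp
        _ ≤ s * (1 - 1/x) + (1 - s) * 1 := this
        _ = 1 - s / x := by field_simp; ring
    have hxs : (0:ℝ) ≤ x ^ s := (Real.rpow_pos_of_pos hx0 s).le
    exact mul_le_mul_of_nonneg_left hbern hxs
  have hxp : x ^ (-p) = x ^ s / x := by
    rw [show (-p : ℝ) = s - 1 by simp [hsdef]]
    exact Real.rpow_sub_one hx0.ne' s
  have hxs0 : (0:ℝ) < x ^ s := Real.rpow_pos_of_pos hx0 s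
  calc (1 - p) * x ^ (-p) = x ^ s * (s / x) := by
        rw [hxp, ← hsdef]; field_simp
    _ = x ^ s - x ^ s * (1 - s / x) := by ring
    _ ≤ x ^ s - (i : ℝ) ^ s := by linarith [key]

/-- Bernoulli-type: for `q > 0` and `i ≥ 1`, `q * (i+1)^(-(1+q)) ≤ i^(-q) - (i+1)^(-q)`. -/
lemma lemB {q : ℝ} (hq : 0 < q) (i : ℕ) (hi : 1 ≤ i) :
    q * ((i : ℝ) + 1) ^ (-(1 + q)) ≤ (i : ℝ) ^ (-q) - ((i : ℝ) + 1) ^ (-q) := by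
  set x : ℝ := (i : ℝ) + 1 with hxdef
  have hi1 : (1:ℝ) ≤ (i:ℝ) := by exact_mod_cast hi
  have hx2 : (2 : ℝ) ≤ x := by simp [hxdef]; linarith
  have hx0 : (0 : ℝ) < x := by linarith
  have hu0 : (0:ℝ) < 1 - 1/x := by
    have : 1/x < 1 := by rw [div_lt_one hx0]; linarith
    linarith
  have hi' : (i : ℝ) = x * (1 - 1/x) := by field_simp; rw [hxdef]; ring
  -- (1 - 1/x)^q ≤ exp(-q/x) ≤ 1/(1 + q/x)
  have h1 : (1 - 1/x) ^ q ≤ Real.exp (-(1/x)) ^ q := by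
    apply Real.rpow_le_rpow hu0.le _ hq.le
    have := Real.add_one_le_exp (-(1/x)); linarith
  have h2 : Real.exp (-(1/x)) ^ q = Real.exp (-(q/x)) := by
    rw [← Real.exp_mul]; ring_nf
  have h3 : Real.exp (-(q/x)) ≤ (1 + q/x)⁻¹ := by
    rw [Real.exp_neg]
    have hpos : (0:ℝ) < 1 + q/x := by positivity
    apply inv_anti₀ hpos
    have := Real.add_one_le_exp (q/x); linarith
  have hkey : (1 + q/x) * (1 - 1/x) ^ q ≤ 1 := by
    have hpos : (0:ℝ) < 1 + q/x := by positivity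
    have : (1 - 1/x) ^ q ≤ (1 + q/x)⁻¹ := by
      calc (1 - 1/x) ^ q ≤ Real.exp (-(1/x)) ^ q := h1
        _ = Real.exp (-(q/x)) := h2
        _ ≤ (1 + q/x)⁻¹ := h3
    calc (1 + q/x) * (1 - 1/x) ^ q ≤ (1 + q/x) * (1 + q/x)⁻¹ :=
          mul_le_mul_of_nonneg_left this hpos.le
      _ = 1 := mul_inv_cancel₀ hpos.ne'
  -- i^(-q) = x^(-q) * (1-1/x)^(-q) ≥ x^(-q) * (1 + q/x)
  have hmain : x ^ (-q) * (1 + q/x) ≤ (i : ℝ) ^ (-q) := by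
    rw [hi', Real.mul_rpow hx0.le hu0.le]
    have hxq : (0:ℝ) < x ^ (-q) := Real.rpow_pos_of_pos hx0 _
    have huq : (0:ℝ) < (1 - 1/x) ^ q := Real.rpow_pos_of_pos hu0 q
    rw [mul_le_mul_iff_right₀ hxq, Real.rpow_neg hu0.le, inv_eq_one_div, le_div_iff₀ huq]
    exact hkey
  have hxe : x ^ (-(1 + q)) = x ^ (-q) / x := by
    rw [show (-(1 + q) : ℝ) = -q - 1 by ring]
    exact Real.rpow_sub_one hx0.ne' _
  have hexp : x ^ (-q) * (1 + q / x) = x ^ (-q) + q * x ^ (-(1 + q)) := by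
    rw [hxe]; field_simp
  linarith [hmain, hexp.symm.le]

/-- `exp(-x) ≤ (1 + d!) * x^(-d/2)` for `x > 0`. -/
lemma lemC (d : ℕ) {x : ℝ} (hx : 0 < x) :
    Real.exp (-x) ≤ (1 + (Nat.factorial d : ℝ)) * x ^ (-(d : ℝ)/2) := by
  have h1 : x ^ ((d : ℝ)/2) ≤ 1 + x ^ d := by
    rcases le_total x 1 with h | h
    · have := Real.rpow_le_one hx.le h (by positivity : (0:ℝ) ≤ (d:ℝ)/2)
      have := pow_nonneg hx.le d
      linarith
    · have h2 : x ^ ((d : ℝ)/2) ≤ x ^ ((d : ℝ)) :=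
        Real.rpow_le_rpow_of_exponent_le h (by linarith [Nat.cast_nonneg (α := ℝ) d])
      rw [Real.rpow_natCast] at h2
      have := pow_nonneg hx.le d
      linarith
  have h2 : x ^ d ≤ (Nat.factorial d : ℝ) * Real.exp x := by
    have := Real.pow_div_factorial_le_exp (x := x) hx.le d
    have hf : (0:ℝ) < (Nat.factorial d : ℝ) := by exact_mod_cast Nat.factorial_pos d
    rw [div_le_iff₀ hf] at this
    linarith [this]
  have h3 : (1:ℝ) ≤ Real.exp x := by
    have := Real.add_one_le_exp x; linarith
  have key : x ^ ((d : ℝ)/2) * Real.exp (-x) ≤ 1 + (Nat.factorial d : ℝ) := by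
    have hf : (0:ℝ) ≤ (Nat.factorial d : ℝ) := by positivity
    have : x ^ ((d : ℝ)/2) ≤ (1 + (Nat.factorial d : ℝ)) * Real.exp x := by
      calc x ^ ((d : ℝ)/2) ≤ 1 + x ^ d := h1
        _ ≤ Real.exp x + (Nat.factorial d : ℝ) * Real.exp x := by linarith
        _ = (1 + (Nat.factorial d : ℝ)) * Real.exp x := by ring
    calc x ^ ((d : ℝ)/2) * Real.exp (-x)
        ≤ ((1 + (Nat.factorial d : ℝ)) * Real.exp x) * Real.exp (-x) :=
          mul_le_mul_of_nonneg_right this (Real.exp_pos _).le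
      _ = 1 + (Nat.factorial d : ℝ) := by
          rw [mul_assoc, ← Real.exp_add]; simp
  have hxp : (0:ℝ) < x ^ ((d : ℝ)/2) := Real.rpow_pos_of_pos hx _
  have hinv : x ^ (-(d : ℝ)/2) = (x ^ ((d : ℝ)/2))⁻¹ := by
    rw [show (-(d:ℝ)/2) = -((d:ℝ)/2) by ring, Real.rpow_neg hx.le]
  have key' := key
  rw [mul_comm] at key'
  rw [hinv, ← div_eq_mul_inv, le_div_iff₀ hxp]
  exact key'

/-- Head estimate for `0 < p < 1`. -/
lemma lemHead {p : ℝ} (hp0 : 0 < p) (hp1 : p < 1) (N : ℕ) :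
    ∑ i ∈ range N, ((i : ℝ) + 1) ^ (-p) ≤ (N : ℝ) ^ (1 - p) / (1 - p) := by
  have h1p : (0:ℝ) < 1 - p := by linarith
  have key : (1 - p) * ∑ i ∈ range N, ((i : ℝ) + 1) ^ (-p) ≤ (N : ℝ) ^ (1 - p) := by
    rw [mul_sum]
    calc ∑ i ∈ range N, (1 - p) * ((i : ℝ) + 1) ^ (-p)
        ≤ ∑ i ∈ range N, (((i : ℝ) + 1) ^ (1 - p) - (i : ℝ) ^ (1 - p)) :=
          sum_le_sum fun i _ => lemA hp0 hp1 i
      _ = (N : ℝ) ^ (1 - p) - (0 : ℝ) ^ (1 - p) := by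
          have := Finset.sum_range_sub (fun i : ℕ => (i : ℝ) ^ (1 - p)) N
          simpa using this
      _ = (N : ℝ) ^ (1 - p) := by rw [Real.zero_rpow h1p.ne']; ring
  rw [le_div_iff₀' h1p]
  exact key

/-- Tail estimate: for `q > 0`, `1 ≤ N`. -/
lemma lemTail {q : ℝ} (hq : 0 < q) (N n : ℕ) (hN : 1 ≤ N) :
    ∑ i ∈ Ico N n, ((i : ℝ) + 1) ^ (-(1 + q)) ≤ (N : ℝ) ^ (-q) / q := by
  have hNpos : (0:ℝ) < (N : ℝ) ^ (-q) := Real.rpow_pos_of_pos (by exact_mod_cast hN) _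
  rcases le_or_gt n N with h | h
  · rw [Finset.Ico_eq_empty (by omega)]
    simp; positivity
  have key : q * ∑ i ∈ Ico N n, ((i : ℝ) + 1) ^ (-(1 + q)) ≤ (N : ℝ) ^ (-q) := by
    rw [mul_sum]
    calc ∑ i ∈ Ico N n, q * ((i : ℝ) + 1) ^ (-(1 + q))
        ≤ ∑ i ∈ Ico N n, ((i : ℝ) ^ (-q) - ((i : ℝ) + 1) ^ (-q)) :=
          sum_le_sum fun i hi => lemB hq i (le_trans hN (Finset.mem_Ico.mp hi).1)
      _ = (N : ℝ) ^ (-q) - (n : ℝ) ^ (-q) := by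
          rw [Finset.sum_Ico_eq_sub _ h.le]
          have e : ∀ m : ℕ, ∑ k ∈ range m, ((k : ℝ) ^ (-q) - ((k : ℝ) + 1) ^ (-q))
              = (0 : ℝ) ^ (-q) - (m : ℝ) ^ (-q) := by
            intro m
            have t := Finset.sum_range_sub' (fun i : ℕ => (i : ℝ) ^ (-q)) m
            push_cast at t
            convert t using 1
          rw [e n, e N]; ring
      _ ≤ (N : ℝ) ^ (-q) := by
          have : (0:ℝ) ≤ (n : ℝ) ^ (-q) := Real.rpow_nonneg (Nat.cast_nonneg n) _
          linarith
  rw [le_div_iff₀' hq]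
  exact key

/-- Harmonic head estimate. -/
lemma lemHead1 (N : ℕ) (hN : 1 ≤ N) :
    ∑ i ∈ range N, ((i : ℝ) + 1)⁻¹ ≤ 1 + Real.log N := by
  obtain ⟨m, rfl⟩ : ∃ m, N = m + 1 := ⟨N - 1, by omega⟩
  rw [Finset.sum_range_succ']
  have h1 : ∑ i ∈ range m, ((((i + 1 : ℕ)) : ℝ) + 1)⁻¹ ≤ Real.log ((m : ℝ) + 1) := by
    have tele := Finset.sum_range_sub (fun i : ℕ => Real.log ((i : ℝ) + 1)) m
    calc ∑ i ∈ range m, ((((i + 1 : ℕ)) : ℝ) + 1)⁻¹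
        ≤ ∑ i ∈ range m,
            (Real.log ((((i + 1 : ℕ)) : ℝ) + 1) - Real.log ((i : ℝ) + 1)) := by
          apply sum_le_sum
          intro i _
          push_cast
          have ha : (0:ℝ) < (i : ℝ) + 1 := by positivity
          have hb : (0:ℝ) < (i : ℝ) + 1 + 1 := by positivity
          have hlog := Real.log_le_sub_one_of_pos
            (show (0:ℝ) < ((i : ℝ) + 1) / ((i : ℝ) + 1 + 1) by positivity)
          rw [Real.log_div ha.ne' hb.ne'] at hlog
          have he : ((i : ℝ) + 1) / ((i : ℝ) + 1 + 1) - 1 = -(((i : ℝ) + 1 + 1)⁻¹) := by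
            field_simp; ring
          rw [he] at hlog
          linarith
      _ = Real.log ((m : ℝ) + 1) - Real.log (((0 : ℕ) : ℝ) + 1) := tele
      _ ≤ Real.log ((m : ℝ) + 1) := by norm_num
  push_cast at h1 ⊢
  norm_num
  linarith

lemma sumSplit {h : ℕ → ℝ} (hh : ∀ i, 0 ≤ h i) (N n : ℕ) :
    ∑ i ∈ range n, h i ≤ ∑ i ∈ range N, h i + ∑ i ∈ Ico N (max n N), h i := by
  calc ∑ i ∈ range n, h i ≤ ∑ i ∈ range (max n N), h i :=
        Finset.sum_le_sum_of_subset_of_nonneg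
          (Finset.range_subset_range.mpr (le_max_left n N)) (fun i _ _ => hh i)
    _ = ∑ i ∈ range N, h i + ∑ i ∈ Ico N (max n N), h i := by
        rw [Finset.range_eq_Ico, Finset.range_eq_Ico]
        exact (Finset.sum_Ico_consecutive _ (Nat.zero_le N) (le_max_right n N)).symm

set_option maxHeartbeats 1000000 in
theorem stmt8 (α : ℝ) (hα : α ∈ Set.Ioc (0 : ℝ) 1) (d : ℕ) (hd : 1 ≤ d) (c₁ : ℝ) (hc₁ : 0 < c₁)
    (lam : ℕ → ℝ) (hpos : ∀ i : ℕ, 1 ≤ i → 0 < lam i)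
    (hweyl : ∀ i : ℕ, 1 ≤ i → c₁ * (i : ℝ) ^ ((2 : ℝ) / d) ≤ lam i) :
    ∃ C > 0, ∀ ε : ℝ, ε ∈ Set.Ioo (0 : ℝ) 1 →
      ((d : ℝ) < 2 * (1 + α) →
        ∑' i : ℕ, Real.exp (-2 * lam (i + 1) * ε) * (lam (i + 1)) ^ (-(1 + α)) ≤ C) ∧
      ((d : ℝ) = 2 * (1 + α) →
        ∑' i : ℕ, Real.exp (-2 * lam (i + 1) * ε) * (lam (i + 1)) ^ (-(1 + α))
          ≤ C * Real.log (1 + ε⁻¹)) ∧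
      ((d : ℝ) > 2 * (1 + α) →
        ∑' i : ℕ, Real.exp (-2 * lam (i + 1) * ε) * (lam (i + 1)) ^ (-(1 + α))
          ≤ C * ε ^ (-((d : ℝ) - 2 * (1 + α)) / 2)) := by
  obtain ⟨hα0, hα1⟩ := hα
  have hd0 : (0:ℝ) < (d:ℝ) := by exact_mod_cast hd
  set p : ℝ := 2 * (1 + α) / d with hpdef
  have hp0 : 0 < p := by rw [hpdef]; positivity
  set K : ℝ := c₁ ^ (-(1 + α)) with hKdef
  have hK0 : 0 < K := Real.rpow_pos_of_pos hc₁ _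
  set Cd : ℝ := 1 + (Nat.factorial d : ℝ) with hCddef
  have hCd0 : 0 < Cd := by rw [hCddef]; positivity
  set T : ℝ := Cd * (2 * c₁) ^ (-(d:ℝ)/2) with hTdef
  have hT0 : 0 < T := by
    rw [hTdef]; exact mul_pos hCd0 (Real.rpow_pos_of_pos (by linarith) _)
  -- shared per-ε facts
  have shared : ∀ ε : ℝ, 0 < ε → ε < 1 → ∀ n : ℕ,
      ∑ i ∈ range n, Real.exp (-2 * lam (i + 1) * ε) * (lam (i + 1)) ^ (-(1 + α))
        ≤ K * ∑ i ∈ range n,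
            Real.exp (-(2 * c₁ * ε) * ((i : ℝ) + 1) ^ ((2:ℝ)/d)) * ((i : ℝ) + 1) ^ (-p) := by
    intro ε hε0 hε1 n
    rw [Finset.mul_sum]
    apply sum_le_sum
    intro i _
    have hj : 1 ≤ i + 1 := by omega
    have hcast : ((i + 1 : ℕ) : ℝ) = (i : ℝ) + 1 := by push_cast; ring
    have hx0 : (0:ℝ) < (i : ℝ) + 1 := by positivity
    have ha0 : 0 < c₁ * ((i : ℝ) + 1) ^ ((2:ℝ)/d) :=
      mul_pos hc₁ (Real.rpow_pos_of_pos hx0 _)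
    have hwa : c₁ * ((i : ℝ) + 1) ^ ((2:ℝ)/d) ≤ lam (i + 1) := by
      have := hweyl (i + 1) hj; rwa [hcast] at this
    have h1 : Real.exp (-2 * lam (i + 1) * ε)
        ≤ Real.exp (-(2 * c₁ * ε) * ((i : ℝ) + 1) ^ ((2:ℝ)/d)) := by
      apply Real.exp_le_exp.mpr
      nlinarith [hwa, hε0]
    have h2 : lam (i + 1) ^ (-(1 + α)) ≤ (c₁ * ((i : ℝ) + 1) ^ ((2:ℝ)/d)) ^ (-(1 + α)) :=
      Real.rpow_le_rpow_of_nonpos ha0 hwa (by linarith)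
    have h3 : (c₁ * ((i : ℝ) + 1) ^ ((2:ℝ)/d)) ^ (-(1 + α)) = K * ((i : ℝ) + 1) ^ (-p) := by
      rw [Real.mul_rpow hc₁.le (Real.rpow_nonneg hx0.le _),
        ← Real.rpow_mul hx0.le, show (2:ℝ)/d * (-(1 + α)) = -p by rw [hpdef]; ring]
    calc Real.exp (-2 * lam (i + 1) * ε) * lam (i + 1) ^ (-(1 + α))
        ≤ Real.exp (-(2 * c₁ * ε) * ((i : ℝ) + 1) ^ ((2:ℝ)/d))
            * (c₁ * ((i : ℝ) + 1) ^ ((2:ℝ)/d)) ^ (-(1 + α)) :=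
          mul_le_mul h1 h2 (Real.rpow_nonneg (hpos (i+1) hj).le _) (Real.exp_pos _).le
      _ = K * (Real.exp (-(2 * c₁ * ε) * ((i : ℝ) + 1) ^ ((2:ℝ)/d)) * ((i : ℝ) + 1) ^ (-p)) := by
          rw [h3]; ring
  have hf0 : ∀ (ε : ℝ) (i : ℕ),
      0 ≤ Real.exp (-2 * lam (i + 1) * ε) * (lam (i + 1)) ^ (-(1 + α)) :=
    fun ε i => mul_nonneg (Real.exp_pos _).le
      (Real.rpow_nonneg (hpos (i+1) (by omega)).le _)
  -- pointwise bounds on g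
  have hgle : ∀ (ε : ℝ), 0 < ε → ∀ i : ℕ,
      Real.exp (-(2 * c₁ * ε) * ((i : ℝ) + 1) ^ ((2:ℝ)/d)) * ((i : ℝ) + 1) ^ (-p)
        ≤ ((i : ℝ) + 1) ^ (-p) := by
    intro ε hε0 i
    have hx0 : (0:ℝ) < (i : ℝ) + 1 := by positivity
    have hexp1 : Real.exp (-(2 * c₁ * ε) * ((i : ℝ) + 1) ^ ((2:ℝ)/d)) ≤ 1 := by
      apply Real.exp_le_one_iff.mpr
      rw [neg_mul]
      exact neg_nonpos.mpr (mul_nonneg (by positivity) (Real.rpow_nonneg hx0.le _))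
    exact mul_le_of_le_one_left (Real.rpow_nonneg hx0.le _) hexp1
  have hgtail : ∀ (ε : ℝ), 0 < ε → ∀ i : ℕ,
      Real.exp (-(2 * c₁ * ε) * ((i : ℝ) + 1) ^ ((2:ℝ)/d)) * ((i : ℝ) + 1) ^ (-p)
        ≤ Cd * (2 * c₁) ^ (-(d:ℝ)/2) * ε ^ (-(d:ℝ)/2) * ((i : ℝ) + 1) ^ (-(1 + p)) := by
    intro ε hε0 i
    have hx0 : (0:ℝ) < (i : ℝ) + 1 := by positivity
    have hy0 : (0:ℝ) < ((i : ℝ) + 1) ^ ((2:ℝ)/d) := Real.rpow_pos_of_pos hx0 _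
    have harg : (0:ℝ) < (2 * c₁ * ε) * ((i : ℝ) + 1) ^ ((2:ℝ)/d) := by positivity
    have hexp : Real.exp (-(2 * c₁ * ε) * ((i : ℝ) + 1) ^ ((2:ℝ)/d))
        ≤ Cd * ((2 * c₁ * ε) * ((i : ℝ) + 1) ^ ((2:ℝ)/d)) ^ (-(d:ℝ)/2) := by
      have := lemC d harg
      rw [neg_mul]
      rw [hCddef]
      exact this
    have hprod : ((2 * c₁ * ε) * ((i : ℝ) + 1) ^ ((2:ℝ)/d)) ^ (-(d:ℝ)/2)
        = (2 * c₁) ^ (-(d:ℝ)/2) * ε ^ (-(d:ℝ)/2) * ((i : ℝ) + 1) ^ (-1 : ℝ) := by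
      rw [Real.mul_rpow (by positivity) hy0.le, Real.mul_rpow (by positivity) hε0.le,
        ← Real.rpow_mul hx0.le, show (2:ℝ)/d * (-(d:ℝ)/2) = -1 by field_simp]
    calc Real.exp (-(2 * c₁ * ε) * ((i : ℝ) + 1) ^ ((2:ℝ)/d)) * ((i : ℝ) + 1) ^ (-p)
        ≤ (Cd * ((2 * c₁ * ε) * ((i : ℝ) + 1) ^ ((2:ℝ)/d)) ^ (-(d:ℝ)/2))
            * ((i : ℝ) + 1) ^ (-p) :=
          mul_le_mul_of_nonneg_right hexp (Real.rpow_nonneg hx0.le _)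
      _ = Cd * (2 * c₁) ^ (-(d:ℝ)/2) * ε ^ (-(d:ℝ)/2)
            * (((i : ℝ) + 1) ^ (-1 : ℝ) * ((i : ℝ) + 1) ^ (-p)) := by rw [hprod]; ring
      _ = Cd * (2 * c₁) ^ (-(d:ℝ)/2) * ε ^ (-(d:ℝ)/2) * ((i : ℝ) + 1) ^ (-(1 + p)) := by
          rw [← Real.rpow_add hx0, show (-1:ℝ) + -p = -(1 + p) by ring]
  -- case split
  rcases lt_trichotomy ((d:ℝ)) (2 * (1 + α)) with hc | hc | hc
  · -- case (i): d < 2(1+α), so p > 1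
    have hp1 : 1 < p := by rw [hpdef, one_lt_div hd0]; exact hc
    have hq0 : 0 < p - 1 := by linarith
    refine ⟨K * (1 + 1/(p-1)), by positivity, ?_⟩
    intro ε hε
    obtain ⟨hε0, hε1⟩ := hε
    refine ⟨fun _ => ?_, fun h => by exfalso; linarith, fun h => by exfalso; linarith⟩
    apply Real.tsum_le_of_sum_range_le (hf0 ε)
    intro n
    refine le_trans (shared ε hε0 hε1 n) ?_
    apply mul_le_mul_of_nonneg_left _ hK0.le
    have hhead : ∑ i ∈ range 1,
        Real.exp (-(2 * c₁ * ε) * ((i : ℝ) + 1) ^ ((2:ℝ)/d)) * ((i : ℝ) + 1) ^ (-p) ≤ 1 := by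
      rw [Finset.sum_range_one]
      calc Real.exp (-(2 * c₁ * ε) * (((0:ℕ) : ℝ) + 1) ^ ((2:ℝ)/d)) * (((0:ℕ) : ℝ) + 1) ^ (-p)
          ≤ (((0:ℕ) : ℝ) + 1) ^ (-p) := hgle ε hε0 0
        _ = 1 := by norm_num
    have htail : ∑ i ∈ Ico 1 (max n 1),
        Real.exp (-(2 * c₁ * ε) * ((i : ℝ) + 1) ^ ((2:ℝ)/d)) * ((i : ℝ) + 1) ^ (-p)
          ≤ 1/(p-1) := by
      calc ∑ i ∈ Ico 1 (max n 1),
          Real.exp (-(2 * c₁ * ε) * ((i : ℝ) + 1) ^ ((2:ℝ)/d)) * ((i : ℝ) + 1) ^ (-p)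
          ≤ ∑ i ∈ Ico 1 (max n 1), ((i : ℝ) + 1) ^ (-(1 + (p-1))) := by
            apply sum_le_sum
            intro i _
            rw [show -(1 + (p-1)) = -p by ring]
            exact hgle ε hε0 i
        _ ≤ ((1:ℕ) : ℝ) ^ (-(p-1)) / (p-1) := lemTail hq0 1 (max n 1) le_rfl
        _ = 1/(p-1) := by norm_num
    calc ∑ i ∈ range n,
        Real.exp (-(2 * c₁ * ε) * ((i : ℝ) + 1) ^ ((2:ℝ)/d)) * ((i : ℝ) + 1) ^ (-p)
        ≤ _ := sumSplit (fun i => by positivity) 1 n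
      _ ≤ 1 + 1/(p-1) := add_le_add hhead htail
  · -- case (ii): d = 2(1+α), so p = 1
    have hp1 : p = 1 := by rw [hpdef, ← hc, div_self hd0.ne']
    refine ⟨K * (3 + (d:ℝ)/2 + 2 * T), by positivity, ?_⟩
    intro ε hε
    obtain ⟨hε0, hε1⟩ := hε
    refine ⟨fun h => by exfalso; linarith, fun _ => ?_, fun h => by exfalso; linarith⟩
    set L : ℝ := Real.log (1 + ε⁻¹) with hLdef
    have hεinv : 1 < ε⁻¹ := (one_lt_inv₀ hε0).mpr hε1
    have hL2 : Real.log 2 ≤ L := Real.log_le_log (by norm_num) (by linarith)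
    have hlog2 : (1:ℝ)/2 ≤ Real.log 2 := by
      have := Real.log_two_gt_d9; linarith
    have hL : (1:ℝ)/2 ≤ L := le_trans hlog2 hL2
    have hL0 : 0 < L := by linarith
    have hEneg : -(d:ℝ)/2 ≤ 0 := by linarith
    have hE1 : (1:ℝ) ≤ ε ^ (-(d:ℝ)/2) :=
      Real.one_le_rpow_of_pos_of_le_one_of_nonpos hε0 hε1.le hEneg
    have hEpos : (0:ℝ) < ε ^ (-(d:ℝ)/2) := by linarith
    set N : ℕ := ⌈ε ^ (-(d:ℝ)/2)⌉₊ with hNdef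
    have hN1 : 1 ≤ N := Nat.one_le_ceil_iff.mpr hEpos
    have hNR : (0:ℝ) < (N:ℝ) := by exact_mod_cast hN1
    have hNup : (N:ℝ) ≤ 2 * ε ^ (-(d:ℝ)/2) := by
      have := Nat.ceil_lt_add_one hEpos.le
      rw [← hNdef] at this
      linarith
    have hNlow : ε ^ (-(d:ℝ)/2) ≤ (N:ℝ) := by rw [hNdef]; exact Nat.le_ceil _
    apply Real.tsum_le_of_sum_range_le (hf0 ε)
    intro n
    refine le_trans (shared ε hε0 hε1 n) ?_
    rw [show K * (3 + (d:ℝ)/2 + 2*T) * L = K * ((3 + (d:ℝ)/2 + 2*T) * L) by ring]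
    apply mul_le_mul_of_nonneg_left _ hK0.le
    have hhead : ∑ i ∈ range N,
        Real.exp (-(2 * c₁ * ε) * ((i : ℝ) + 1) ^ ((2:ℝ)/d)) * ((i : ℝ) + 1) ^ (-p)
          ≤ (3 + (d:ℝ)/2) * L := by
      have h1 : ∑ i ∈ range N,
          Real.exp (-(2 * c₁ * ε) * ((i : ℝ) + 1) ^ ((2:ℝ)/d)) * ((i : ℝ) + 1) ^ (-p)
            ≤ ∑ i ∈ range N, ((i : ℝ) + 1)⁻¹ := by
        apply sum_le_sum
        intro i _
        rw [← Real.rpow_neg_one ((i:ℝ)+1), show (-1:ℝ) = -p by rw [hp1]]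
        exact hgle ε hε0 i
      have h2 := lemHead1 N hN1
      have h3 : Real.log N ≤ Real.log 2 + ((d:ℝ)/2) * Real.log ε⁻¹ := by
        calc Real.log N ≤ Real.log (2 * ε ^ (-(d:ℝ)/2)) := Real.log_le_log hNR hNup
          _ = Real.log 2 + Real.log (ε ^ (-(d:ℝ)/2)) :=
              Real.log_mul (by norm_num) (ne_of_gt hEpos)
          _ = Real.log 2 + (-(d:ℝ)/2) * Real.log ε := by rw [Real.log_rpow hε0]
          _ = Real.log 2 + ((d:ℝ)/2) * Real.log ε⁻¹ := by rw [Real.log_inv]; ring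
      have h4 : Real.log ε⁻¹ ≤ L := Real.log_le_log (by positivity) (by linarith)
      have h5 : ((d:ℝ)/2) * Real.log ε⁻¹ ≤ ((d:ℝ)/2) * L :=
        mul_le_mul_of_nonneg_left h4 (by positivity)
      calc ∑ i ∈ range N,
          Real.exp (-(2 * c₁ * ε) * ((i : ℝ) + 1) ^ ((2:ℝ)/d)) * ((i : ℝ) + 1) ^ (-p)
          ≤ 1 + Real.log N := le_trans h1 h2
        _ ≤ 1 + Real.log 2 + ((d:ℝ)/2) * L := by linarith
        _ ≤ (3 + (d:ℝ)/2) * L := by nlinarith [hL, hL2, hL0]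
    have htail : ∑ i ∈ Ico N (max n N),
        Real.exp (-(2 * c₁ * ε) * ((i : ℝ) + 1) ^ ((2:ℝ)/d)) * ((i : ℝ) + 1) ^ (-p)
          ≤ 2 * T * L := by
      have h1 : ∑ i ∈ Ico N (max n N),
          Real.exp (-(2 * c₁ * ε) * ((i : ℝ) + 1) ^ ((2:ℝ)/d)) * ((i : ℝ) + 1) ^ (-p)
            ≤ Cd * (2 * c₁) ^ (-(d:ℝ)/2) * ε ^ (-(d:ℝ)/2)
              * ∑ i ∈ Ico N (max n N), ((i : ℝ) + 1) ^ (-(1 + (1:ℝ))) := by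
        rw [Finset.mul_sum]
        apply sum_le_sum
        intro i _
        rw [show -(1 + (1:ℝ)) = -(1+p) by rw [hp1]]
        exact hgtail ε hε0 i
      have h2 : ∑ i ∈ Ico N (max n N), ((i : ℝ) + 1) ^ (-(1 + (1:ℝ)))
          ≤ (N:ℝ) ^ (-(1:ℝ)) / 1 := lemTail one_pos N (max n N) hN1
      have h3 : (N:ℝ) ^ (-(1:ℝ)) ≤ ε ^ ((d:ℝ)/2) := by
        have := Real.rpow_le_rpow_of_nonpos hEpos hNlow (by norm_num : (-1:ℝ) ≤ 0)
        rwa [← Real.rpow_mul hε0.le, show (-(d:ℝ)/2) * (-1) = (d:ℝ)/2 by ring] at this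
      have h4 : ε ^ (-(d:ℝ)/2) * ε ^ ((d:ℝ)/2) = 1 := by
        rw [← Real.rpow_add hε0, show -(d:ℝ)/2 + (d:ℝ)/2 = 0 by ring, Real.rpow_zero]
      calc ∑ i ∈ Ico N (max n N),
          Real.exp (-(2 * c₁ * ε) * ((i : ℝ) + 1) ^ ((2:ℝ)/d)) * ((i : ℝ) + 1) ^ (-p)
          ≤ Cd * (2 * c₁) ^ (-(d:ℝ)/2) * ε ^ (-(d:ℝ)/2) * ((N:ℝ) ^ (-(1:ℝ)) / 1) :=
            le_trans h1 (mul_le_mul_of_nonneg_left h2 (by positivity))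
        _ = Cd * (2 * c₁) ^ (-(d:ℝ)/2) * (ε ^ (-(d:ℝ)/2) * (N:ℝ) ^ (-(1:ℝ))) := by ring
        _ ≤ Cd * (2 * c₁) ^ (-(d:ℝ)/2) * (ε ^ (-(d:ℝ)/2) * ε ^ ((d:ℝ)/2)) := by
            apply mul_le_mul_of_nonneg_left (mul_le_mul_of_nonneg_left h3 hEpos.le)
              (by positivity)
        _ = T := by rw [h4, hTdef]; ring
        _ ≤ 2 * T * L := by nlinarith [hT0, hL]
    calc ∑ i ∈ range n,
        Real.exp (-(2 * c₁ * ε) * ((i : ℝ) + 1) ^ ((2:ℝ)/d)) * ((i : ℝ) + 1) ^ (-p)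
        ≤ _ := sumSplit (fun i => by positivity) N n
      _ ≤ (3 + (d:ℝ)/2) * L + 2 * T * L := add_le_add hhead htail
      _ = (3 + (d:ℝ)/2 + 2*T) * L := by ring
  · -- case (iii): d > 2(1+α), so p < 1
    have hp1 : p < 1 := by rw [hpdef, div_lt_one hd0]; exact hc
    have h1p : 0 < 1 - p := by linarith
    refine ⟨K * (2/(1-p) + T/p),
      mul_pos hK0 (add_pos (div_pos two_pos h1p) (div_pos hT0 hp0)), ?_⟩
    intro ε hε
    obtain ⟨hε0, hε1⟩ := hε
    refine ⟨fun h => by exfalso; linarith, fun h => by exfalso; linarith, fun _ => ?_⟩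
    set E : ℝ := ε ^ (-((d : ℝ) - 2 * (1 + α)) / 2) with hEdef
    have hE0 : 0 < E := Real.rpow_pos_of_pos hε0 _
    have hexpeq : (-(d:ℝ)/2) * (1-p) = -((d : ℝ) - 2 * (1 + α)) / 2 := by
      rw [hpdef]
      field_simp
    have hEneg : -(d:ℝ)/2 ≤ 0 := by linarith
    have hE1 : (1:ℝ) ≤ ε ^ (-(d:ℝ)/2) :=
      Real.one_le_rpow_of_pos_of_le_one_of_nonpos hε0 hε1.le hEneg
    have hEpos : (0:ℝ) < ε ^ (-(d:ℝ)/2) := by linarith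
    set N : ℕ := ⌈ε ^ (-(d:ℝ)/2)⌉₊ with hNdef
    have hN1 : 1 ≤ N := Nat.one_le_ceil_iff.mpr hEpos
    have hNR : (0:ℝ) < (N:ℝ) := by exact_mod_cast hN1
    have hNup : (N:ℝ) ≤ 2 * ε ^ (-(d:ℝ)/2) := by
      have := Nat.ceil_lt_add_one hEpos.le
      rw [← hNdef] at this
      linarith
    have hNlow : ε ^ (-(d:ℝ)/2) ≤ (N:ℝ) := by rw [hNdef]; exact Nat.le_ceil _
    apply Real.tsum_le_of_sum_range_le (hf0 ε)
    intro n
    refine le_trans (shared ε hε0 hε1 n) ?_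
    rw [show K * (2/(1-p) + T/p) * E = K * ((2/(1-p) + T/p) * E) by ring]
    apply mul_le_mul_of_nonneg_left _ hK0.le
    have hNpow : (N:ℝ) ^ (1-p) ≤ 2 * E := by
      calc (N:ℝ) ^ (1-p) ≤ (2 * ε ^ (-(d:ℝ)/2)) ^ (1-p) :=
            Real.rpow_le_rpow (Nat.cast_nonneg N) hNup h1p.le
        _ = 2 ^ (1-p) * (ε ^ (-(d:ℝ)/2)) ^ (1-p) := Real.mul_rpow (by norm_num) hEpos.le
        _ ≤ 2 * (ε ^ (-(d:ℝ)/2)) ^ (1-p) := by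
            apply mul_le_mul_of_nonneg_right _ (Real.rpow_nonneg hEpos.le _)
            calc (2:ℝ) ^ (1-p) ≤ (2:ℝ) ^ (1:ℝ) :=
                  Real.rpow_le_rpow_of_exponent_le one_le_two (by linarith)
              _ = 2 := Real.rpow_one 2
        _ = 2 * E := by rw [← Real.rpow_mul hε0.le, hexpeq]
    have hhead : ∑ i ∈ range N,
        Real.exp (-(2 * c₁ * ε) * ((i : ℝ) + 1) ^ ((2:ℝ)/d)) * ((i : ℝ) + 1) ^ (-p)
          ≤ (2/(1-p)) * E := by
      calc ∑ i ∈ range N,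
          Real.exp (-(2 * c₁ * ε) * ((i : ℝ) + 1) ^ ((2:ℝ)/d)) * ((i : ℝ) + 1) ^ (-p)
          ≤ ∑ i ∈ range N, ((i : ℝ) + 1) ^ (-p) := sum_le_sum fun i _ => hgle ε hε0 i
        _ ≤ (N:ℝ) ^ (1-p) / (1-p) := lemHead hp0 hp1 N
        _ ≤ (2 * E) / (1-p) := by gcongr
        _ = (2/(1-p)) * E := by ring
    have htail : ∑ i ∈ Ico N (max n N),
        Real.exp (-(2 * c₁ * ε) * ((i : ℝ) + 1) ^ ((2:ℝ)/d)) * ((i : ℝ) + 1) ^ (-p)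
          ≤ (T/p) * E := by
      have h1 : ∑ i ∈ Ico N (max n N),
          Real.exp (-(2 * c₁ * ε) * ((i : ℝ) + 1) ^ ((2:ℝ)/d)) * ((i : ℝ) + 1) ^ (-p)
            ≤ Cd * (2 * c₁) ^ (-(d:ℝ)/2) * ε ^ (-(d:ℝ)/2)
              * ∑ i ∈ Ico N (max n N), ((i : ℝ) + 1) ^ (-(1 + p)) := by
        rw [Finset.mul_sum]
        exact sum_le_sum fun i _ => hgtail ε hε0 i
      have h2 : ∑ i ∈ Ico N (max n N), ((i : ℝ) + 1) ^ (-(1 + p))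
          ≤ (N:ℝ) ^ (-p) / p := lemTail hp0 N (max n N) hN1
      have h3 : (N:ℝ) ^ (-p) ≤ ε ^ (((d:ℝ)/2) * p) := by
        have := Real.rpow_le_rpow_of_nonpos hEpos hNlow (neg_nonpos.mpr hp0.le)
        rwa [← Real.rpow_mul hε0.le, show (-(d:ℝ)/2) * (-p) = ((d:ℝ)/2) * p by ring] at this
      have h4 : ε ^ (-(d:ℝ)/2) * ε ^ (((d:ℝ)/2) * p) = E := by
        rw [← Real.rpow_add hε0, hEdef, show -(d:ℝ)/2 + ((d:ℝ)/2) * p = (-(d:ℝ)/2) * (1-p) by ring,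
          hexpeq]
      calc ∑ i ∈ Ico N (max n N),
          Real.exp (-(2 * c₁ * ε) * ((i : ℝ) + 1) ^ ((2:ℝ)/d)) * ((i : ℝ) + 1) ^ (-p)
          ≤ Cd * (2 * c₁) ^ (-(d:ℝ)/2) * ε ^ (-(d:ℝ)/2) * ((N:ℝ) ^ (-p) / p) :=
            le_trans h1 (mul_le_mul_of_nonneg_left h2 (by positivity))
        _ = Cd * (2 * c₁) ^ (-(d:ℝ)/2) * (ε ^ (-(d:ℝ)/2) * (N:ℝ) ^ (-p)) / p := by ring
        _ ≤ Cd * (2 * c₁) ^ (-(d:ℝ)/2) * (ε ^ (-(d:ℝ)/2) * ε ^ (((d:ℝ)/2) * p)) / p := by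
            gcongr
        _ = (T/p) * E := by rw [h4, hTdef]; ring
    calc ∑ i ∈ range n,
        Real.exp (-(2 * c₁ * ε) * ((i : ℝ) + 1) ^ ((2:ℝ)/d)) * ((i : ℝ) + 1) ^ (-p)
        ≤ _ := sumSplit (fun i => by positivity) N n
      _ ≤ (2/(1-p)) * E + (T/p) * E := add_le_add hhead htail
      _ = (2/(1-p) + T/p) * E := by ring
end
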